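/- Let f and g be φ_{h,m}-convex functions on [0,b] (with the same h, m and φ), with m ∈ (0,1], and let x, y ∈ [0,b] be such that φ(x) < mφ(y). Assume that the functions t ↦ h(t)² and t ↦ h(t)h(1−t) are Lebesgue integrable on (0,1) and that the product f·g is Lebesgue integrable on [φ(x), mφ(y)]. Then (1/(mφ(y) − φ(x))) ∫_{φ(x)}^{mφ(y)} f(u)g(u) du ≤ M·∫₀¹ h(t)² dt + m·N·∫₀¹ h(t)h(1−t) dt, where M = f(φ(x))g(φ(x)) + m²·f(φ(y))g(φ(y)) and N = f(φ(x))g(φ(y)) + f(φ(y))g(φ(x)). -/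

import Mathlib

open MeasureTheory Set intervalIntegral

/-- A nonnegative function `f` on `[0,b]` is `φ_{h,m}`-convex if
`f (t·φ(x) + m·(1−t)·φ(y)) ≤ h(t)·f(φ(x)) + m·h(1−t)·f(φ(y))`
for all `x, y ∈ [0,b]` and `t ∈ (0,1)`. -/
def PhiHMConvex (b m : ℝ) (h φ f : ℝ → ℝ) : Prop :=
  (∀ x ∈ Set.Icc (0 : ℝ) b, 0 ≤ f x) ∧
  ∀ x ∈ Set.Icc (0 : ℝ) b, ∀ y ∈ Set.Icc (0 : ℝ) b, ∀ t ∈ Set.Ioo (0 : ℝ) 1,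
    f (t * φ x + m * (1 - t) * φ y) ≤ h t * f (φ x) + m * h (1 - t) * f (φ y)

theorem phiHMConvex_mul_integral_ineq (b m : ℝ) (h φ f g : ℝ → ℝ)
    (hb : 0 < b) (hm : m ∈ Set.Ioc (0 : ℝ) 1)
    (hh : ∀ t ∈ Set.Ioo (0 : ℝ) 1, 0 ≤ h t) (hh0 : h ≠ 0)
    (hφ : ∀ x ∈ Set.Icc (0 : ℝ) b, φ x ∈ Set.Icc (0 : ℝ) b)
    (hf : PhiHMConvex b m h φ f) (hg : PhiHMConvex b m h φ g)
    (x : ℝ) (hx : x ∈ Set.Icc (0 : ℝ) b) (y : ℝ) (hy : y ∈ Set.Icc (0 : ℝ) b)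
    (hxy : φ x < m * φ y)
    (hint₂ : IntervalIntegrable (fun t => h t ^ 2) volume 0 1)
    (hint₁ : IntervalIntegrable (fun t => h t * h (1 - t)) volume 0 1)
    (hintfg : IntervalIntegrable (fun u => f u * g u) volume (φ x) (m * φ y)) :
    (1 / (m * φ y - φ x)) * ∫ u in (φ x)..(m * φ y), f u * g u ≤
      (f (φ x) * g (φ x) + m ^ 2 * f (φ y) * g (φ y)) * (∫ t in (0 : ℝ)..1, h t ^ 2) +
        m * (f (φ x) * g (φ y) + f (φ y) * g (φ x)) * ∫ t in (0 : ℝ)..1, h t * h (1 - t) := by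
  obtain ⟨hm0, hm1⟩ := hm
  set X := φ x with hX
  set Y := φ y with hY
  have hXmem : X ∈ Icc (0:ℝ) b := hφ x hx
  have hYmem : Y ∈ Icc (0:ℝ) b := hφ y hy
  set c : ℝ := X - m * Y with hc
  have hcneg : c < 0 := by simp [hc]; linarith
  have hcne : c ≠ 0 := ne_of_lt hcneg
  -- change of variables
  have key : (∫ t in (0:ℝ)..1, f (c * t + m * Y) * g (c * t + m * Y)) =
      (1 / (m * Y - X)) * ∫ u in X..(m * Y), f u * g u := by
    rw [intervalIntegral.integral_comp_mul_add (fun u => f u * g u) hcne (m * Y)]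
    rw [intervalIntegral.integral_symm]
    simp only [smul_eq_mul, mul_zero, zero_add, mul_one]
    have : c + m * Y = X := by ring
    rw [this, hc]
    have hne2 : m * Y - X ≠ 0 := by intro h0; exact hcne (by rw [hc]; linarith)
    have hne3 : X - m * Y ≠ 0 := by intro h0; exact hcne (by rw [hc]; linarith)
    field_simp
    ring
  -- integrability of the composed function
  have hcomp : IntervalIntegrable (fun t => f (c * t + m * Y) * g (c * t + m * Y)) volume 0 1 := by
    have h1 := (hintfg.symm.comp_add_right (m * Y)).comp_mul_left (c := c)
    have e0 : m * Y - m * Y = 0 := by ring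
    have e1 : X - m * Y = c := rfl
    rw [e0, e1, zero_div, div_self hcne] at h1
    exact h1
  -- integrability of the bound
  have hrefl : IntervalIntegrable (fun t => h (1 - t) ^ 2) volume 0 1 := by
    have := (hint₂.comp_sub_left 1).symm
    simpa using this
  set A := f X with hA; set B := g X with hB; set C := f Y with hC; set D := g Y with hD
  have hbound : IntervalIntegrable (fun t => h t ^ 2 * (A * B) + m ^ 2 * h (1 - t) ^ 2 * (C * D)
      + m * (h t * h (1 - t)) * (A * D + C * B)) volume 0 1 := by
    exact ((hint₂.mul_const _).add ((hrefl.const_mul _).mul_const _)).add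
      ((hint₁.const_mul _).mul_const _)
  -- pointwise bound a.e.
  have hae : ∀ᵐ t ∂(volume.restrict (Icc (0:ℝ) 1)),
      f (c * t + m * Y) * g (c * t + m * Y) ≤
        h t ^ 2 * (A * B) + m ^ 2 * h (1 - t) ^ 2 * (C * D)
          + m * (h t * h (1 - t)) * (A * D + C * B) := by
    have hIoo : ∀ᵐ t ∂(volume.restrict (Icc (0:ℝ) 1)), t ∈ Ioo (0:ℝ) 1 := by
      have hne : ∀ᵐ t ∂(volume : Measure ℝ), t ≠ 0 ∧ t ≠ 1 := by
        have : (volume : Measure ℝ) ({0} ∪ {1}) = 0 := by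
          rw [measure_union_null_iff]; simp
        rw [ae_iff]
        convert this using 2
        ext t; simp [not_and_or, or_comm]; tauto
      filter_upwards [ae_restrict_mem measurableSet_Icc, ae_restrict_of_ae hne] with t ht hne'
      exact ⟨lt_of_le_of_ne ht.1 (Ne.symm hne'.1), lt_of_le_of_ne ht.2 hne'.2⟩
    filter_upwards [hIoo] with t ht
    have hu : c * t + m * Y = t * X + m * (1 - t) * Y := by ring
    rw [hu]
    have ht1 : (1 - t) ∈ Ioo (0:ℝ) 1 := ⟨by linarith [ht.2], by linarith [ht.1]⟩
    have hfu := hf.2 x hx y hy t ht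
    have hgu := hg.2 x hx y hy t ht
    have humem : t * X + m * (1 - t) * Y ∈ Icc (0:ℝ) b := by
      constructor
      · have := hXmem.1; have := hYmem.1
        have h1 : 0 ≤ t * X := mul_nonneg (le_of_lt ht.1) hXmem.1
        have h2 : 0 ≤ m * (1 - t) * Y :=
          mul_nonneg (mul_nonneg (le_of_lt hm0) (le_of_lt ht1.1)) hYmem.1
        linarith
      · have h1 : t * X ≤ t * b := mul_le_mul_of_nonneg_left hXmem.2 (le_of_lt ht.1)
        have h2 : m * (1 - t) * Y ≤ 1 * (1 - t) * b := by
          apply mul_le_mul (by nlinarith [ht.2, hm1]) hYmem.2 hYmem.1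
          nlinarith [ht.2]
        nlinarith
    have hgnn : 0 ≤ g (t * X + m * (1 - t) * Y) := hg.1 _ humem
    have hAnn : 0 ≤ h t * A + m * h (1 - t) * C := by
      have := hh t ht; have := hh _ ht1
      have hAnn' : 0 ≤ A := hf.1 X hXmem
      have hCnn : 0 ≤ C := hf.1 Y hYmem
      positivity
    have := mul_le_mul hfu hgu hgnn hAnn
    calc f (t * X + m * (1 - t) * Y) * g (t * X + m * (1 - t) * Y)
        ≤ (h t * A + m * h (1 - t) * C) * (h t * B + m * h (1 - t) * D) := this
      _ = h t ^ 2 * (A * B) + m ^ 2 * h (1 - t) ^ 2 * (C * D)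
          + m * (h t * h (1 - t)) * (A * D + C * B) := by ring
  have hmono := intervalIntegral.integral_mono_ae_restrict (μ := volume)
    (f := fun t => f (c * t + m * Y) * g (c * t + m * Y))
    (g := fun t => h t ^ 2 * (A * B) + m ^ 2 * h (1 - t) ^ 2 * (C * D)
      + m * (h t * h (1 - t)) * (A * D + C * B)) zero_le_one hcomp hbound hae
  rw [key] at hmono
  refine hmono.trans_eq ?_
  have hsplit : (∫ t in (0:ℝ)..1, (h t ^ 2 * (A * B) + m ^ 2 * h (1 - t) ^ 2 * (C * D)
      + m * (h t * h (1 - t)) * (A * D + C * B))) =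
      (∫ t in (0:ℝ)..1, h t ^ 2 * (A * B)) + (∫ t in (0:ℝ)..1, m ^ 2 * h (1 - t) ^ 2 * (C * D))
      + ∫ t in (0:ℝ)..1, m * (h t * h (1 - t)) * (A * D + C * B) := by
    rw [intervalIntegral.integral_add ((hint₂.mul_const _).add ((hrefl.const_mul _).mul_const _))
      ((hint₁.const_mul _).mul_const _),
      intervalIntegral.integral_add (hint₂.mul_const _) ((hrefl.const_mul _).mul_const _)]
  rw [hsplit]
  have e1 : (∫ t in (0:ℝ)..1, h t ^ 2 * (A * B)) = (A * B) * ∫ t in (0:ℝ)..1, h t ^ 2 := by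
    rw [← intervalIntegral.integral_const_mul]; congr 1; ext t; ring
  have e2 : (∫ t in (0:ℝ)..1, m ^ 2 * h (1 - t) ^ 2 * (C * D)) =
      (m ^ 2 * (C * D)) * ∫ t in (0:ℝ)..1, h t ^ 2 := by
    have : (∫ t in (0:ℝ)..1, h (1 - t) ^ 2) = ∫ t in (0:ℝ)..1, h t ^ 2 := by
      have := intervalIntegral.integral_comp_sub_left (a := (0:ℝ)) (b := 1)
        (fun t => h t ^ 2) 1
      simpa using this
    rw [← this, ← intervalIntegral.integral_const_mul]; congr 1; ext t; ring
  have e3 : (∫ t in (0:ℝ)..1, m * (h t * h (1 - t)) * (A * D + C * B)) =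
      (m * (A * D + C * B)) * ∫ t in (0:ℝ)..1, h t * h (1 - t) := by
    rw [← intervalIntegral.integral_const_mul]; congr 1; ext t; ring
  rw [e1, e2, e3]; ring
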